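/- Suppose u_1, ..., u_n ∈ Fin L^k satisfy the coordinate-wise self-consistency condition with respect to v ∈ Fin L^k (for each coordinate t and every value j, #{i : u_i^t = v^t} ≥ #{i : u_i^t = j}). If there exists an index b with u_b = v, then b maximizes the total pairwise fractional agreement: for every index i, Σ_{j ≠ b} a(u_b, u_j) ≥ Σ_{j ≠ i} a(u_i, u_j), where a(x,y) = (1/k) Σ_{t=1}^k 𝟙[x_t = y_t]. -/

import Mathlib

/-- Fractional agreement `a(x,y) = (1/k) Σ_t 𝟙[x t = y t]`. -/
noncomputable def fracAgree {k L : ℕ} (x y : Fin k → Fin L) : ℝ :=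
  (∑ t : Fin k, if x t = y t then (1 : ℝ) else 0) / k

/-- under coordinate-wise self-consistency, if some generation `u b` equals
the target `v`, then `b` maximizes the total pairwise fractional agreement. -/
theorem stmt2 {n k L : ℕ} (u : Fin n → Fin k → Fin L) (v : Fin k → Fin L)
    (hsc : ∀ t : Fin k, ∀ j : Fin L,
      (Finset.univ.filter (fun i => u i t = j)).card ≤
        (Finset.univ.filter (fun i => u i t = v t)).card)
    (b : Fin n) (hb : u b = v) :
    ∀ i : Fin n,
      ∑ j ∈ Finset.univ.erase i, fracAgree (u i) (u j) ≤
        ∑ j ∈ Finset.univ.erase b, fracAgree (u b) (u j) := by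
  intro i
  -- full sums over all j
  have key : ∑ j : Fin n, fracAgree (u i) (u j) ≤ ∑ j : Fin n, fracAgree (u b) (u j) := by
    unfold fracAgree
    rw [← Finset.sum_div, ← Finset.sum_div]
    apply div_le_div_of_nonneg_right (hc := Nat.cast_nonneg k)
    have hcomm : ∀ x : Fin n, (∑ j : Fin n, ∑ t : Fin k, if u x t = u j t then (1:ℝ) else 0)
        = ∑ t : Fin k, ∑ j : Fin n, if u x t = u j t then (1:ℝ) else 0 := fun x =>
      Finset.sum_comm
    rw [hcomm, hcomm]
    apply Finset.sum_le_sum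
    intro t _
    have h1 : ∀ x : Fin n, (∑ j : Fin n, if u x t = u j t then (1 : ℝ) else 0)
        = ((Finset.univ.filter (fun j => u j t = u x t)).card : ℝ) := by
      intro x
      rw [Finset.sum_boole]
      norm_num
      congr 1
      simp only [eq_comm]
    rw [h1, h1]
    have := hsc t (u i t)
    rw [← hb] at this
    exact_mod_cast this
  have hself : fracAgree (u i) (u i) = fracAgree (u b) (u b) := by
    unfold fracAgree
    simp
  calc ∑ j ∈ Finset.univ.erase i, fracAgree (u i) (u j)
      = (∑ j : Fin n, fracAgree (u i) (u j)) - fracAgree (u i) (u i) := by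
        rw [Finset.sum_erase_eq_sub (Finset.mem_univ i)]
    _ ≤ (∑ j : Fin n, fracAgree (u b) (u j)) - fracAgree (u b) (u b) := by
        rw [← hself]; linarith
    _ = ∑ j ∈ Finset.univ.erase b, fracAgree (u b) (u j) := by
        rw [Finset.sum_erase_eq_sub (Finset.mem_univ b)]
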